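/- Let E = (E⁰, E¹, r, s) be a topological graph with E⁰ totally disconnected and with r proper and surjective. Then the relations ∼ and ≈ on C_c(E⁰, ℤ)⁺ are equivalence relations. -/

import Mathlib

open Set

/-- A topological graph `E = (E⁰, E¹, r, s)`: a continuous range map and a source map
that is a local homeomorphism, between locally compact Hausdorff spaces. -/
structure TopGraph (V E : Type*) [TopologicalSpace V] [TopologicalSpace E] where
  r : E → V
  s : E → V
  continuous_r : Continuous r
  isLocalHomeomorph_s : IsLocalHomeomorph s

/-- `C_c(E⁰, ℤ)⁺`: compactly supported continuous functions `E⁰ → ℤ` with nonnegative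
values. -/
def CcPosV (V : Type*) [TopologicalSpace V] : Set (V → ℤ) :=
  {f | Continuous f ∧ HasCompactSupport f ∧ ∀ v, 0 ≤ f v}

namespace TopGraph

variable {V E : Type*} [TopologicalSpace V] [TopologicalSpace E] (gr : TopGraph V E)

/-- `Θ¹(f)(v) = Σ_{e ∈ E¹, s(e) = v} f(r(e))` (a finite sum when `r` is proper and `f`
is compactly supported). -/
noncomputable def theta1 (f : V → ℤ) : V → ℤ :=
  fun v => ∑ᶠ e ∈ {e : E | gr.s e = v}, f (gr.r e)

/-- `Θⁿ = (Θ¹)ⁿ`, so that `Θⁿ(f)(v) = Σ_{λ ∈ Eⁿ, s(λ) = v} f(r(λ))`. -/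
noncomputable def theta (n : ℕ) (f : V → ℤ) : V → ℤ := (theta1 gr)^[n] f


/-- `f ∼ g` iff `Θᵖ(f) = Θ^q(g)` for some `p, q ∈ ℕ`. -/
def Sim (f g : V → ℤ) : Prop := ∃ p q : ℕ, gr.theta p f = gr.theta q g

/-- `f ≈ g` iff there are finitely many pairs `(fᵢ, gᵢ)` in `C_c(E⁰,ℤ)⁺ × C_c(E⁰,ℤ)⁺`
with `f ∼ Σᵢ fᵢ`, `g ∼ Σᵢ gᵢ`, and `fᵢ ∼ gᵢ` for all `i`. -/
def Approx (f g : V → ℤ) : Prop :=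
  ∃ L : List ((V → ℤ) × (V → ℤ)),
    (∀ p ∈ L, p.1 ∈ CcPosV V ∧ p.2 ∈ CcPosV V) ∧
    gr.Sim f (L.map Prod.fst).sum ∧ gr.Sim g (L.map Prod.snd).sum ∧
    ∀ p ∈ L, gr.Sim p.1 p.2

end TopGraph

set_option linter.unusedSectionVars false

namespace TopGraph

variable {V E : Type*} [TopologicalSpace V] [TopologicalSpace E] (gr : TopGraph V E)

section Analytic

variable [T2Space V] [T2Space E]

lemma continuous_s : Continuous gr.s := gr.isLocalHomeomorph_s.continuous

/-- A compact set meets each fiber of `s` in a finite set. -/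
lemma fiber_inter_finite {K : Set E} (hK : IsCompact K) (v : V) :
    (gr.s ⁻¹' {v} ∩ K).Finite := by
  have hcl : IsClosed (gr.s ⁻¹' {v}) := (isClosed_singleton).preimage gr.continuous_s
  have hC : IsCompact (gr.s ⁻¹' {v} ∩ K) := hK.inter_left hcl
  choose φ hφ hφeq using gr.isLocalHomeomorph_s
  obtain ⟨t, ht⟩ := hC.elim_finite_subcover (fun e : E => (φ e).source)
    (fun e => (φ e).open_source) (fun a ha => mem_iUnion.2 ⟨a, hφ a⟩)
  have : gr.s ⁻¹' {v} ∩ K ⊆ ⋃ e ∈ t, (gr.s ⁻¹' {v} ∩ (φ e).source) := by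
    intro a ha
    obtain ⟨e, he, hae⟩ := Set.mem_iUnion₂.1 (ht ha)
    exact Set.mem_iUnion₂.2 ⟨e, he, ha.1, hae⟩
  refine Set.Finite.subset (Set.Finite.biUnion t.finite_toSet fun e _ => ?_) this
  apply Set.Subsingleton.finite
  intro a ha b hb
  have := (φ e).injOn ha.2 hb.2
  apply this
  have ha' : gr.s a = v := ha.1
  have hb' : gr.s b = v := hb.1
  rw [← hφeq e, ha', hb']

variable {gr}

lemma support_fin {f : V → ℤ} (hproper : IsProperMap gr.r) (hf : HasCompactSupport f) (v : V) :
    ({e : E | gr.s e = v} ∩ Function.support fun e => f (gr.r e)).Finite := by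
  have hK : IsCompact (gr.r ⁻¹' tsupport f) := hproper.isCompact_preimage hf
  refine Set.Finite.subset (gr.fiber_inter_finite hK v) ?_
  rintro e ⟨he, hne⟩
  exact ⟨he, subset_closure hne⟩

lemma theta1_nonneg {f : V → ℤ} (hproper : IsProperMap gr.r) (hf : f ∈ CcPosV V) (v : V) :
    0 ≤ gr.theta1 f v := by
  rw [theta1, finsum_mem_eq_sum _ (support_fin hproper hf.2.1 v)]
  exact Finset.sum_nonneg fun e _ => hf.2.2 _

lemma theta1_hcs {f : V → ℤ} (hproper : IsProperMap gr.r) (hf : HasCompactSupport f) :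
    HasCompactSupport (gr.theta1 f) := by
  have hK : IsCompact (gr.r ⁻¹' tsupport f) := hproper.isCompact_preimage hf
  apply HasCompactSupport.intro (hK.image gr.continuous_s)
  intro v hv
  apply finsum_mem_of_eqOn_zero
  intro e he
  by_contra hne
  exact hv ⟨e, subset_closure hne, he⟩

lemma theta1_continuous {f : V → ℤ} (hproper : IsProperMap gr.r) (hfc : Continuous f)
    (hf : HasCompactSupport f) : Continuous (gr.theta1 f) := by
  classical
  rw [continuous_iff_continuousAt]
  intro v₀
  set K : Set E := gr.r ⁻¹' tsupport f with hKdef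
  have hKc : IsCompact K := hproper.isCompact_preimage hf
  have hT : (gr.s ⁻¹' {v₀} ∩ K).Finite := gr.fiber_inter_finite hKc v₀
  obtain ⟨U, hU, hUdisj⟩ := hT.t2_separation
  choose φ0 hφ0 hφ0eq using gr.isLocalHomeomorph_s
  set φ : E → OpenPartialHomeomorph E V := fun e => (φ0 e).restrOpen (U e) (hU e).2 with hφdef
  have hsource : ∀ e, (φ e).source = (φ0 e).source ∩ U e := fun e =>
    (φ0 e).restrOpen_source _ _
  have hφcoe : ∀ e, (φ e : E → V) = gr.s := by
    intro e
    have : (φ e : E → V) = (φ0 e : E → V) := rfl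
    rw [this, ← hφ0eq e]
  have hmem : ∀ e, e ∈ (φ e).source := fun e => (hsource e) ▸ ⟨hφ0 e, (hU e).1⟩
  set T : Finset E := hT.toFinset with hTdef
  -- every e ∈ T maps to v₀
  have hsT : ∀ e ∈ T, gr.s e = v₀ := by
    intro e he
    rw [hTdef, Set.Finite.mem_toFinset] at he
    exact he.1
  have htarget : ∀ e ∈ T, v₀ ∈ (φ e).target := by
    intro e he
    have := (φ e).map_source (hmem e)
    rwa [show (φ e) e = gr.s e from congrFun (hφcoe e) e, hsT e he] at this
  -- the open neighborhood W of v₀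
  set W : Set V := (⋂ e ∈ T, (φ e).target) ∩ (gr.s '' (K \ ⋃ e ∈ T, (φ e).source))ᶜ with hWdef
  have hWopen : IsOpen W := by
    apply IsOpen.inter
    · exact isOpen_biInter_finset fun e _ => (φ e).open_target
    · refine (IsCompact.isClosed ?_).isOpen_compl
      refine IsCompact.image ?_ gr.continuous_s
      refine hKc.of_isClosed_subset ?_ diff_subset
      exact hKc.isClosed.sdiff (isOpen_biUnion fun e _ => (φ e).open_source)
  have hv₀W : v₀ ∈ W := by
    constructor
    · exact mem_biInter fun e he => htarget e he
    · rintro ⟨a, ⟨haK, haU⟩, hsa⟩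
      apply haU
      have haT : a ∈ T := by
        rw [hTdef, Set.Finite.mem_toFinset]
        exact ⟨hsa, haK⟩
      exact mem_biUnion haT (hmem a)
  -- local formula on W
  have hloc : ∀ v ∈ W, gr.theta1 f v = ∑ e ∈ T, f (gr.r ((φ e).symm v)) := by
    intro v hv
    have hvtarget : ∀ e ∈ T, v ∈ (φ e).target := fun e he =>
      Set.mem_iInter₂.1 hv.1 e he
    have hinj : Set.InjOn (fun e => (φ e).symm v) T := by
      intro e₁ h₁ e₂ h₂ hee
      by_contra hne
      have m₁ : (φ e₁).symm v ∈ (φ e₁).source := (φ e₁).map_target (hvtarget e₁ h₁)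
      have m₂ : (φ e₂).symm v ∈ (φ e₂).source := (φ e₂).map_target (hvtarget e₂ h₂)
      rw [hsource] at m₁ m₂
      have h₁' : e₁ ∈ (gr.s ⁻¹' {v₀} ∩ K) := (Set.Finite.mem_toFinset hT).1 h₁
      have h₂' : e₂ ∈ (gr.s ⁻¹' {v₀} ∩ K) := (Set.Finite.mem_toFinset hT).1 h₂
      have hd : Disjoint (U e₁) (U e₂) := hUdisj h₁' h₂' hne
      have hee' : (φ e₁).symm v = (φ e₂).symm v := hee
      exact Set.disjoint_left.1 hd m₁.2 (hee' ▸ m₂.2)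
    rw [theta1, finsum_mem_eq_sum_of_subset (t := T.image fun e => (φ e).symm v) _ ?_ ?_]
    · exact Finset.sum_image fun e he e' he' h => hinj he he' h
    · -- s⁻¹ v ∩ support ⊆ image
      rintro a ⟨hsa, hne⟩
      have haK : a ∈ K := subset_closure hne
      have haU : a ∈ ⋃ e ∈ T, (φ e).source := by
        by_contra hnot
        exact hv.2 ⟨a, ⟨haK, hnot⟩, hsa⟩
      obtain ⟨e, he, hae⟩ := Set.mem_iUnion₂.1 haU
      refine Finset.mem_image.2 ⟨e, he, ?_⟩
      have : (φ e) a = v := by rw [congrFun (hφcoe e) a]; exact hsa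
      rw [← this, (φ e).left_inv hae]
    · -- image ⊆ s ⁻¹ v
      intro a ha
      obtain ⟨e, he, rfl⟩ := Finset.mem_image.1 ha
      have : gr.s ((φ e).symm v) = (φ e) ((φ e).symm v) := (congrFun (hφcoe e) _).symm
      rw [mem_setOf_eq, this, (φ e).right_inv (hvtarget e he)]
  -- continuity of the local formula
  have hcont : ContinuousOn (fun v => ∑ e ∈ T, f (gr.r ((φ e).symm v))) W := by
    apply continuousOn_finset_sum
    intro e he
    apply (hfc.comp gr.continuous_r).comp_continuousOn
    apply ContinuousOn.mono ((φ e).continuousOn_symm) ?_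
    intro v hv
    exact Set.mem_iInter₂.1 hv.1 e he
  have hca : ContinuousAt (fun v => ∑ e ∈ T, f (gr.r ((φ e).symm v))) v₀ :=
    hcont.continuousAt (hWopen.mem_nhds hv₀W)
  apply hca.congr
  filter_upwards [hWopen.mem_nhds hv₀W] with v hv
  exact (hloc v hv).symm

end Analytic

section Algebra

variable [T2Space V] [T2Space E] {gr}

lemma ccpos_zero : (0 : V → ℤ) ∈ CcPosV V :=
  ⟨continuous_const, by simpa [HasCompactSupport, tsupport] using isCompact_empty, fun v => le_refl 0⟩

lemma ccpos_add {f g : V → ℤ} (hf : f ∈ CcPosV V) (hg : g ∈ CcPosV V) : f + g ∈ CcPosV V :=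
  ⟨hf.1.add hg.1, hf.2.1.add hg.2.1, fun v => add_nonneg (hf.2.2 v) (hg.2.2 v)⟩

lemma ccpos_list_sum (L : List (V → ℤ)) (h : ∀ f ∈ L, f ∈ CcPosV V) : L.sum ∈ CcPosV V := by
  induction L with
  | nil => exact ccpos_zero
  | cons a L ih =>
    rw [List.sum_cons]
    exact ccpos_add (h a (List.mem_cons_self)) (ih fun f hf => h f (List.mem_cons_of_mem a hf))

lemma ccpos_finset_sum {ι : Type*} (s : Finset ι) (F : ι → V → ℤ)
    (h : ∀ i ∈ s, F i ∈ CcPosV V) : (∑ i ∈ s, F i) ∈ CcPosV V := by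
  classical
  induction s using Finset.induction_on with
  | empty => simpa using ccpos_zero
  | insert _ _ ha ih =>
    rw [Finset.sum_insert ha]
    exact ccpos_add (h _ (Finset.mem_insert_self _ _))
      (ih (fun i hi => h i (Finset.mem_insert_of_mem hi)))

lemma theta1_mem (hproper : IsProperMap gr.r) {f : V → ℤ} (hf : f ∈ CcPosV V) : gr.theta1 f ∈ CcPosV V :=
  ⟨theta1_continuous hproper hf.1 hf.2.1, theta1_hcs hproper hf.2.1, theta1_nonneg hproper hf⟩

lemma theta_mem (hproper : IsProperMap gr.r) (n : ℕ) {f : V → ℤ} (hf : f ∈ CcPosV V) : gr.theta n f ∈ CcPosV V := by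
  induction n with
  | zero => exact hf
  | succ n ih =>
    rw [theta, Function.iterate_succ_apply']
    exact theta1_mem hproper ih

lemma theta1_add (hproper : IsProperMap gr.r) {f g : V → ℤ} (hf : HasCompactSupport f) (hg : HasCompactSupport g) :
    gr.theta1 (f + g) = gr.theta1 f + gr.theta1 g := by
  classical
  funext v
  have hfin : ({e : E | gr.s e = v} ∩ Function.support fun e => f (gr.r e)).Finite :=
    support_fin hproper hf v
  have hgin : ({e : E | gr.s e = v} ∩ Function.support fun e => g (gr.r e)).Finite :=
    support_fin hproper hg v
  set F : Finset E := hfin.toFinset ∪ hgin.toFinset with hF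
  have hFsub : (F : Set E) ⊆ {e : E | gr.s e = v} := by
    intro a ha
    rcases Finset.mem_union.1 ha with h | h
    · exact (hfin.mem_toFinset.1 h).1
    · exact (hgin.mem_toFinset.1 h).1
  have e1 : gr.theta1 f v = ∑ e ∈ F, f (gr.r e) := by
    rw [theta1]
    refine finsum_mem_eq_sum_of_subset _ ?_ hFsub
    intro a ha
    exact Finset.mem_union_left _ (hfin.mem_toFinset.2 ha)
  have e2 : gr.theta1 g v = ∑ e ∈ F, g (gr.r e) := by
    rw [theta1]
    refine finsum_mem_eq_sum_of_subset _ ?_ hFsub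
    intro a ha
    exact Finset.mem_union_right _ (hgin.mem_toFinset.2 ha)
  have e3 : gr.theta1 (f + g) v = ∑ e ∈ F, (f (gr.r e) + g (gr.r e)) := by
    rw [theta1]
    refine finsum_mem_eq_sum_of_subset _ ?_ hFsub
    rintro a ⟨ha, hne⟩
    have : f (gr.r a) ≠ 0 ∨ g (gr.r a) ≠ 0 := by
      by_contra h
      push_neg at h
      exact hne (by simpa [h.1, h.2] using rfl)
    rcases this with h | h
    · exact Finset.mem_union_left _ (hfin.mem_toFinset.2 ⟨ha, h⟩)
    · exact Finset.mem_union_right _ (hgin.mem_toFinset.2 ⟨ha, h⟩)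
  rw [Pi.add_apply, e1, e2, e3, Finset.sum_add_distrib]

lemma theta_add (hproper : IsProperMap gr.r) (n : ℕ) {f g : V → ℤ} (hf : f ∈ CcPosV V) (hg : g ∈ CcPosV V) :
    gr.theta n (f + g) = gr.theta n f + gr.theta n g := by
  induction n with
  | zero => rfl
  | succ n ih =>
    have hsucc : ∀ h : V → ℤ, gr.theta (n + 1) h = gr.theta1 (gr.theta n h) := fun h =>
      Function.iterate_succ_apply' _ _ _
    rw [hsucc, hsucc, hsucc, ih,
      theta1_add hproper (theta_mem hproper n hf).2.1 (theta_mem hproper n hg).2.1]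

lemma theta1_zero : gr.theta1 (0 : V → ℤ) = 0 := by
  funext v
  rw [theta1]
  exact finsum_mem_of_eqOn_zero fun e _ => rfl

lemma theta_zero (n : ℕ) : gr.theta n (0 : V → ℤ) = 0 := by
  induction n with
  | zero => rfl
  | succ n ih =>
    have hsucc : gr.theta (n + 1) (0 : V → ℤ) = gr.theta1 (gr.theta n 0) :=
      Function.iterate_succ_apply' _ _ _
    rw [hsucc, ih, theta1_zero]

lemma theta_list_sum (hproper : IsProperMap gr.r) (n : ℕ) (L : List (V → ℤ)) (h : ∀ f ∈ L, f ∈ CcPosV V) :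
    gr.theta n L.sum = (L.map (gr.theta n)).sum := by
  induction L with
  | nil => simpa using theta_zero n
  | cons a L ih =>
    rw [List.sum_cons, List.map_cons, List.sum_cons,
      theta_add hproper n (h a (List.mem_cons_self))
        (ccpos_list_sum L (fun f hf => h f (List.mem_cons_of_mem a hf))),
      ih (fun f hf => h f (List.mem_cons_of_mem a hf))]

lemma theta_finset_sum (hproper : IsProperMap gr.r) (n : ℕ) {ι : Type*} (s : Finset ι) (F : ι → V → ℤ)
    (h : ∀ i ∈ s, F i ∈ CcPosV V) :
    gr.theta n (∑ i ∈ s, F i) = ∑ i ∈ s, gr.theta n (F i) := by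
  classical
  induction s using Finset.induction_on with
  | empty => simpa using theta_zero n
  | @insert a s ha ih =>
    rw [Finset.sum_insert ha, Finset.sum_insert ha,
      theta_add hproper n (h _ (Finset.mem_insert_self _ _))
        (ccpos_finset_sum s F (fun i hi => h i (Finset.mem_insert_of_mem hi))),
      ih (fun i hi => h i (Finset.mem_insert_of_mem hi))]

end Algebra

section SimLemmas

variable {gr}

lemma theta_add_apply (m n : ℕ) (f : V → ℤ) :
    gr.theta (m + n) f = gr.theta m (gr.theta n f) :=
  Function.iterate_add_apply _ m n f

lemma sim_refl (f : V → ℤ) : gr.Sim f f := ⟨0, 0, rfl⟩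

lemma sim_symm {f g : V → ℤ} (h : gr.Sim f g) : gr.Sim g f := by
  obtain ⟨p, q, h⟩ := h
  exact ⟨q, p, h.symm⟩

lemma sim_trans {f g h : V → ℤ} (h1 : gr.Sim f g) (h2 : gr.Sim g h) : gr.Sim f h := by
  obtain ⟨p, q, e1⟩ := h1
  obtain ⟨p', q', e2⟩ := h2
  refine ⟨p' + p, q + q', ?_⟩
  rw [theta_add_apply, e1, ← theta_add_apply, Nat.add_comm p' q, theta_add_apply, e2,
    ← theta_add_apply]

lemma sim_theta_right (n : ℕ) {f g : V → ℤ} (h : gr.Sim f g) : gr.Sim f (gr.theta n g) := by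
  obtain ⟨p, q, e⟩ := h
  exact ⟨n + p, q, by rw [theta_add_apply, e, ← theta_add_apply, ← theta_add_apply,
    Nat.add_comm n q, theta_add_apply]⟩

lemma sim_theta_theta (a b : ℕ) (f : V → ℤ) : gr.Sim (gr.theta a f) (gr.theta b f) :=
  ⟨b, a, by rw [← theta_add_apply, ← theta_add_apply, Nat.add_comm]⟩

end SimLemmas

section Refine

variable [T2Space V] [T2Space E] {gr}

lemma ccpos_eq_zero_of_add_eq_zero {g w : V → ℤ} (hg : g ∈ CcPosV V) (hw : w ∈ CcPosV V)
    (h : g + w = 0) : g = 0 ∧ w = 0 := by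
  constructor <;> funext v <;>
  · have hv : g v + w v = 0 := congrFun h v
    have := hg.2.2 v
    have := hw.2.2 v
    simp only [Pi.zero_apply]
    omega

lemma split_lemma : ∀ (m : ℕ) (y : Fin m → V → ℤ) (g w : V → ℤ),
    (∀ j, y j ∈ CcPosV V) → g ∈ CcPosV V → w ∈ CcPosV V → g + w = ∑ j, y j →
    ∃ a b : Fin m → V → ℤ, (∀ j, a j ∈ CcPosV V) ∧ (∀ j, b j ∈ CcPosV V) ∧
      (∀ j, a j + b j = y j) ∧ (∑ j, a j) = g ∧ (∑ j, b j) = w := by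
  intro m
  induction m with
  | zero =>
    intro y g w hy hg hw hsum
    rw [Finset.univ_eq_empty, Finset.sum_empty] at hsum
    obtain ⟨hg0, hw0⟩ := ccpos_eq_zero_of_add_eq_zero hg hw hsum
    exact ⟨fun j => 0, fun j => 0, fun j => j.elim0, fun j => j.elim0, fun j => j.elim0,
      by simp [hg0], by simp [hw0]⟩
  | succ m ih =>
    intro y g w hy hg hw hsum
    set a₀ : V → ℤ := fun v => min (g v) (y 0 v) with ha₀
    set b₀ : V → ℤ := y 0 - a₀ with hb₀
    set g' : V → ℤ := g - a₀ with hg'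
    set w' : V → ℤ := w - b₀ with hw'
    have hsum' : ∀ v, g v + w v = y 0 v + ∑ j : Fin m, y j.succ v := by
      intro v
      have := congrFun hsum v
      rw [Pi.add_apply, Finset.sum_apply, Fin.sum_univ_succ] at this
      rw [this]
    have hsucc_nonneg : ∀ v, 0 ≤ ∑ j : Fin m, y j.succ v :=
      fun v => Finset.sum_nonneg fun j _ => (hy j.succ).2.2 v
    have ha₀mem : a₀ ∈ CcPosV V := by
      refine ⟨hg.1.min (hy 0).1, hg.2.1.mono ?_, fun v => le_min (hg.2.2 v) ((hy 0).2.2 v)⟩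
      intro v hv
      simp only [Function.mem_support] at hv ⊢
      intro h0
      apply hv
      rw [ha₀]
      have := (hy 0).2.2 v
      simp only [h0]
      omega
    have hb₀mem : b₀ ∈ CcPosV V := by
      refine ⟨(hy 0).1.sub ha₀mem.1, ?_, fun v => by
        simp only [hb₀, Pi.sub_apply, ha₀, sub_nonneg]; exact min_le_right _ _⟩
      rw [hb₀, sub_eq_add_neg]
      exact (hy 0).2.1.add ha₀mem.2.1.neg
    have hg'mem : g' ∈ CcPosV V := by
      refine ⟨hg.1.sub ha₀mem.1, ?_, fun v => by
        simp only [hg', Pi.sub_apply, ha₀, sub_nonneg]; exact min_le_left _ _⟩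
      rw [hg', sub_eq_add_neg]
      exact hg.2.1.add ha₀mem.2.1.neg
    have hw'mem : w' ∈ CcPosV V := by
      refine ⟨hw.1.sub hb₀mem.1, ?_, ?_⟩
      · rw [hw', sub_eq_add_neg]
        exact hw.2.1.add hb₀mem.2.1.neg
      · intro v
        simp only [hw', Pi.sub_apply, hb₀, ha₀, sub_nonneg]
        have h1 := hsum' v
        have h2 := hsucc_nonneg v
        have := hg.2.2 v
        have := hw.2.2 v
        have := (hy 0).2.2 v
        rcases le_total (g v) (y 0 v) with h | h
        · rw [min_eq_left h]; omega
        · rw [min_eq_right h]; omega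
    have hsum'' : g' + w' = ∑ j : Fin m, y j.succ := by
      funext v
      have h1 := hsum' v
      simp only [hg', hw', hb₀, Pi.add_apply, Pi.sub_apply, Finset.sum_apply]
      omega
    obtain ⟨a', b', ha', hb', hab', hsa', hsb'⟩ :=
      ih (fun j => y j.succ) g' w' (fun j => hy j.succ) hg'mem hw'mem hsum''
    refine ⟨Fin.cons a₀ a', Fin.cons b₀ b', ?_, ?_, ?_, ?_, ?_⟩
    · intro j
      refine Fin.cases ?_ ?_ j
      · simpa using ha₀mem
      · intro i; simpa using ha' i
    · intro j
      refine Fin.cases ?_ ?_ j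
      · simpa using hb₀mem
      · intro i; simpa using hb' i
    · intro j
      refine Fin.cases ?_ ?_ j
      · simp [hb₀]
      · intro i; simpa using hab' i
    · rw [Fin.sum_cons, hsa', hg']
      abel
    · rw [Fin.sum_cons, hsb', hw']
      abel

lemma refine_lemma : ∀ (n m : ℕ) (x : Fin n → V → ℤ) (y : Fin m → V → ℤ),
    (∀ i, x i ∈ CcPosV V) → (∀ j, y j ∈ CcPosV V) → ∑ i, x i = ∑ j, y j →
    ∃ z : Fin n → Fin m → V → ℤ, (∀ i j, z i j ∈ CcPosV V) ∧
      (∀ i, ∑ j, z i j = x i) ∧ (∀ j, ∑ i, z i j = y j) := by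
  intro n
  induction n with
  | zero =>
    intro m x y hx hy hsum
    rw [Finset.univ_eq_empty, Finset.sum_empty] at hsum
    refine ⟨fun i => i.elim0, fun i => i.elim0, fun i => i.elim0, fun j => ?_⟩
    rw [Finset.univ_eq_empty, Finset.sum_empty]
    funext v
    have h0 : ∑ j, y j v = 0 := by
      have := congrFun hsum v
      rw [Finset.sum_apply] at this
      exact this.symm
    have := (Finset.sum_eq_zero_iff_of_nonneg
      (fun j _ => (hy j).2.2 v)).1 h0 j (Finset.mem_univ j)
    simp [this]
  | succ n ih =>
    intro m x y hx hy hsum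
    have hsum' : x 0 + ∑ i : Fin n, x i.succ = ∑ j, y j := by
      rw [← hsum, Fin.sum_univ_succ]
    obtain ⟨a, b, hamem, hbmem, hab, hsa, hsb⟩ := split_lemma m y (x 0)
      (∑ i : Fin n, x i.succ) hy (hx 0)
      (ccpos_finset_sum Finset.univ _ (fun i _ => hx i.succ)) hsum'
    obtain ⟨z', hz'mem, hz'row, hz'col⟩ := ih m (fun i => x i.succ) b
      (fun i => hx i.succ) hbmem hsb.symm
    refine ⟨Fin.cons a z', ?_, ?_, ?_⟩
    · intro i
      refine Fin.cases ?_ ?_ i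
      · intro j; simpa using hamem j
      · intro i' j; simpa using hz'mem i' j
    · intro i
      refine Fin.cases ?_ ?_ i
      · simpa using hsa
      · intro i'; simpa using hz'row i'
    · intro j
      rw [Fin.sum_univ_succ]
      simp only [Fin.cons_zero, Fin.cons_succ]
      rw [hz'col j, hab j]

end Refine

section ApproxLemmas

variable [T2Space V] [T2Space E] {gr}

lemma list_sum_map_get {α β : Type*} [AddCommMonoid β] (L : List α) (F : α → β) :
    (L.map F).sum = ∑ i : Fin L.length, F (L.get i) := by
  conv_lhs => rw [← List.ofFn_get L]
  rw [List.map_ofFn, List.sum_ofFn]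
  rfl

lemma approx_refl {f : V → ℤ} (hf : f ∈ CcPosV V) : gr.Approx f f := by
  refine ⟨[(f, f)], ?_, ?_, ?_, ?_⟩
  · rintro p hp
    simp only [List.mem_singleton] at hp
    subst hp
    exact ⟨hf, hf⟩
  · simpa using sim_refl f
  · simpa using sim_refl f
  · rintro p hp
    simp only [List.mem_singleton] at hp
    subst hp
    exact sim_refl f

lemma approx_symm {f g : V → ℤ} (h : gr.Approx f g) : gr.Approx g f := by
  obtain ⟨L, hmem, hf, hg, hsim⟩ := h
  refine ⟨L.map Prod.swap, ?_, ?_, ?_, ?_⟩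
  · intro p hp
    obtain ⟨q, hq, rfl⟩ := List.mem_map.1 hp
    exact ⟨(hmem q hq).2, (hmem q hq).1⟩
  · rw [List.map_map]
    exact hg
  · rw [List.map_map]
    exact hf
  · intro p hp
    obtain ⟨q, hq, rfl⟩ := List.mem_map.1 hp
    exact sim_symm (hsim q hq)

lemma approx_trans (hproper : IsProperMap gr.r) {f g h : V → ℤ}
    (hfg : gr.Approx f g) (hgh : gr.Approx g h) : gr.Approx f h := by
  obtain ⟨L, hLmem, hfL, hgL, hLsim⟩ := hfg
  obtain ⟨L', hL'mem, hgL', hhL', hL'sim⟩ := hgh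
  obtain ⟨a, b, hab⟩ : gr.Sim (L.map Prod.snd).sum (L'.map Prod.fst).sum :=
    sim_trans (sim_symm hgL) hgL'
  set n := L.length with hn
  set m := L'.length with hm
  set x : Fin n → V → ℤ := fun i => gr.theta a (L.get i).2 with hxdef
  set y : Fin m → V → ℤ := fun j => gr.theta b (L'.get j).1 with hydef
  have hxmem : ∀ i, x i ∈ CcPosV V := fun i =>
    theta_mem hproper a (hLmem _ (L.get_mem i)).2
  have hymem : ∀ j, y j ∈ CcPosV V := fun j =>
    theta_mem hproper b (hL'mem _ (L'.get_mem j)).1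
  have hx : ∑ i, x i = gr.theta a (L.map Prod.snd).sum := by
    rw [list_sum_map_get L Prod.snd,
      theta_finset_sum hproper a Finset.univ _ (fun i _ => (hLmem _ (L.get_mem i)).2)]
  have hy : ∑ j, y j = gr.theta b (L'.map Prod.fst).sum := by
    rw [list_sum_map_get L' Prod.fst,
      theta_finset_sum hproper b Finset.univ _ (fun j _ => (hL'mem _ (L'.get_mem j)).1)]
  have hxy : ∑ i, x i = ∑ j, y j := by rw [hx, hy, hab]
  obtain ⟨z, hzmem, hrow, hcol⟩ := refine_lemma n m x y hxmem hymem hxy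
  have hsimx : ∀ i, gr.Sim (L.get i).1 (x i) := fun i =>
    sim_theta_right a (hLsim _ (L.get_mem i))
  have hsimy : ∀ j, gr.Sim (L'.get j).2 (y j) := fun j =>
    sim_theta_right b (sim_symm (hL'sim _ (L'.get_mem j)))
  choose c d hcd using hsimx
  choose c' d' hcd' using hsimy
  set C := Finset.univ.sup c with hC
  set D := Finset.univ.sup c' with hD
  set S : Fin n → ℕ := fun i => (C - c i) + d i with hS
  set T : Fin m → ℕ := fun j => (D - c' j) + d' j with hT
  have hrowsum : ∀ i, ∑ j, gr.theta (S i) (z i j) = gr.theta C (L.get i).1 := by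
    intro i
    rw [← theta_finset_sum hproper _ Finset.univ _ (fun j _ => hzmem i j), hrow i, hS]
    show gr.theta ((C - c i) + d i) (x i) = _
    rw [theta_add_apply, ← hcd i, ← theta_add_apply,
      Nat.sub_add_cancel (Finset.le_sup (Finset.mem_univ i))]
  have hcolsum : ∀ j, ∑ i, gr.theta (T j) (z i j) = gr.theta D (L'.get j).2 := by
    intro j
    rw [← theta_finset_sum hproper _ Finset.univ _ (fun i _ => hzmem i j), hcol j, hT]
    show gr.theta ((D - c' j) + d' j) (y j) = _
    rw [theta_add_apply, ← hcd' j, ← theta_add_apply,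
      Nat.sub_add_cancel (Finset.le_sup (Finset.mem_univ j))]
  set M : List ((V → ℤ) × (V → ℤ)) :=
    (List.ofFn fun i : Fin n => List.ofFn fun j : Fin m =>
      (gr.theta (S i) (z i j), gr.theta (T j) (z i j))).flatten with hM
  have hMmem : ∀ p ∈ M, ∃ i j, p = (gr.theta (S i) (z i j), gr.theta (T j) (z i j)) := by
    intro p hp
    rw [hM, List.mem_flatten] at hp
    obtain ⟨l, hl, hpl⟩ := hp
    obtain ⟨i, rfl⟩ := Set.mem_range.1 ((List.mem_ofFn' _ _).1 hl)
    obtain ⟨j, rfl⟩ := Set.mem_range.1 ((List.mem_ofFn' _ _).1 hpl)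
    exact ⟨i, j, rfl⟩
  have hMfst : (M.map Prod.fst).sum = gr.theta C (L.map Prod.fst).sum := by
    rw [hM, List.map_flatten, List.map_ofFn]
    rw [List.sum_flatten, List.map_ofFn, List.sum_ofFn]
    have : ∀ i : Fin n, (((List.ofFn fun j : Fin m =>
        (gr.theta (S i) (z i j), gr.theta (T j) (z i j))).map Prod.fst).sum)
        = gr.theta C (L.get i).1 := by
      intro i
      rw [List.map_ofFn, List.sum_ofFn]
      exact hrowsum i
    calc (∑ i : Fin n, ((List.map Prod.fst ∘ fun i : Fin n => List.ofFn fun j : Fin m =>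
          (gr.theta (S i) (z i j), gr.theta (T j) (z i j))) i).sum)
        = ∑ i : Fin n, gr.theta C (L.get i).1 := by
          refine Finset.sum_congr rfl fun i _ => ?_
          simpa using this i
      _ = gr.theta C (L.map Prod.fst).sum := by
          rw [list_sum_map_get L Prod.fst,
            theta_finset_sum hproper C Finset.univ _ (fun i _ => (hLmem _ (L.get_mem i)).1)]
  have hMsnd : (M.map Prod.snd).sum = gr.theta D (L'.map Prod.snd).sum := by
    rw [hM, List.map_flatten, List.map_ofFn]
    rw [List.sum_flatten, List.map_ofFn, List.sum_ofFn]
    have : ∀ i : Fin n, (((List.ofFn fun j : Fin m =>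
        (gr.theta (S i) (z i j), gr.theta (T j) (z i j))).map Prod.snd).sum)
        = ∑ j : Fin m, gr.theta (T j) (z i j) := by
      intro i
      rw [List.map_ofFn, List.sum_ofFn]
      rfl
    calc (∑ i : Fin n, ((List.map Prod.snd ∘ fun i : Fin n => List.ofFn fun j : Fin m =>
          (gr.theta (S i) (z i j), gr.theta (T j) (z i j))) i).sum)
        = ∑ i : Fin n, ∑ j : Fin m, gr.theta (T j) (z i j) := by
          refine Finset.sum_congr rfl fun i _ => ?_
          simpa using this i
      _ = ∑ j : Fin m, ∑ i : Fin n, gr.theta (T j) (z i j) := Finset.sum_comm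
      _ = ∑ j : Fin m, gr.theta D (L'.get j).2 := Finset.sum_congr rfl fun j _ => hcolsum j
      _ = gr.theta D (L'.map Prod.snd).sum := by
          rw [list_sum_map_get L' Prod.snd,
            theta_finset_sum hproper D Finset.univ _ (fun j _ => (hL'mem _ (L'.get_mem j)).2)]
  refine ⟨M, ?_, ?_, ?_, ?_⟩
  · intro p hp
    obtain ⟨i, j, rfl⟩ := hMmem p hp
    exact ⟨theta_mem hproper _ (hzmem i j), theta_mem hproper _ (hzmem i j)⟩
  · rw [hMfst]
    exact sim_theta_right C hfL
  · rw [hMsnd]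
    exact sim_theta_right D hhL'
  · intro p hp
    obtain ⟨i, j, rfl⟩ := hMmem p hp
    exact sim_theta_theta _ _ _

end ApproxLemmas

end TopGraph

/-- **Statement 17.** Let `E` be a topological graph with `E⁰` totally disconnected and
with `r` proper and surjective.  Then `∼` and `≈` are equivalence relations on
`C_c(E⁰, ℤ)⁺`. -/
theorem sim_and_approx_equivalence {V E : Type*}
    [TopologicalSpace V] [LocallyCompactSpace V] [T2Space V] [SecondCountableTopology V]
    [TotallyDisconnectedSpace V]
    [TopologicalSpace E] [LocallyCompactSpace E] [T2Space E] [SecondCountableTopology E]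
    (gr : TopGraph V E) (hproper : IsProperMap gr.r) (hsurj : Function.Surjective gr.r) :
    Equivalence (fun f g : ↥(CcPosV V) => gr.Sim f.1 g.1) ∧
    Equivalence (fun f g : ↥(CcPosV V) => gr.Approx f.1 g.1) := by
  constructor
  · exact ⟨fun f => TopGraph.sim_refl f.1, TopGraph.sim_symm, TopGraph.sim_trans⟩
  · exact ⟨fun f => TopGraph.approx_refl f.2, TopGraph.approx_symm,
      fun h1 h2 => TopGraph.approx_trans hproper h1 h2⟩
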